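/- Let n ≥ 2 and let R be a commutative ring with a proper ideal 𝔞 such that 2 is not a zero divisor in R/𝔞. Then χ(Γ_n(R)) ≤ χ(Γ_n(R/𝔞)), where Γ_n(R) is the graph on SL_n(R) with x ~ y iff det(x+y)=0. -/

import Mathlib

/-- The regular graph on `SL_n(R)`: distinct `x, y` are adjacent iff `det(x+y) = 0`. -/
def regGraph (n : ℕ) (R : Type) [CommRing R] :
    SimpleGraph (Matrix.SpecialLinearGroup (Fin n) R) where
  Adj x y := x ≠ y ∧ ((x : Matrix (Fin n) (Fin n) R) + y).det = 0
  symm := by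
    constructor
    rintro x y ⟨h1, h2⟩
    exact ⟨h1.symm, by rwa [add_comm]⟩
  loopless := ⟨fun x h => h.1 rfl⟩

/-- Let `n ≥ 2` and let `𝔞` be a proper ideal of a commutative ring `R` such that
`2` is not a zero divisor in `R/𝔞`. Then `χ(Γ_n(R)) ≤ χ(Γ_n(R/𝔞))`. -/
theorem chromatic_regular_graph_quotient (n : ℕ) (hn : 2 ≤ n)
    {R : Type} [CommRing R] (𝔞 : Ideal R) (h𝔞 : 𝔞 ≠ ⊤)
    (h2 : ∀ x : R ⧸ 𝔞, 2 * x = 0 → x = 0) :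
    (regGraph n R).chromaticNumber ≤ (regGraph n (R ⧸ 𝔞)).chromaticNumber := by
  haveI : Nontrivial (R ⧸ 𝔞) := Ideal.Quotient.nontrivial_iff.mpr h𝔞
  set φ := Matrix.SpecialLinearGroup.map (n := Fin n) (Ideal.Quotient.mk 𝔞)
  have hom : (regGraph n R) →g (regGraph n (R ⧸ 𝔞)) := by
    refine ⟨φ, ?_⟩
    rintro x y ⟨hne, hdet⟩
    have hdet' : ((φ x : Matrix (Fin n) (Fin n) (R ⧸ 𝔞)) + (φ y : Matrix (Fin n) (Fin n) (R ⧸ 𝔞))).det = 0 := by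
      have : ((φ x : Matrix (Fin n) (Fin n) (R ⧸ 𝔞)) + (φ y : Matrix (Fin n) (Fin n) (R ⧸ 𝔞))) =
          (Ideal.Quotient.mk 𝔞).mapMatrix ((x : Matrix (Fin n) (Fin n) R) + (y : Matrix (Fin n) (Fin n) R)) := by
        simp [φ, Matrix.SpecialLinearGroup.map_apply_coe, Matrix.map_add]
      rw [this, ← RingHom.map_det, hdet, map_zero]
    refine ⟨?_, hdet'⟩
    intro heq
    -- then φ x = φ y, so det(φx + φx) = 2^n * det φx = 2^n = 0
    rw [heq] at hdet'
    have h2n : (2 : R ⧸ 𝔞) ^ n = 0 := by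
      have : ((φ y : Matrix (Fin n) (Fin n) (R ⧸ 𝔞)) + φ y) =
          (2 : R ⧸ 𝔞) • (φ y : Matrix (Fin n) (Fin n) (R ⧸ 𝔞)) := by
        rw [two_smul]
      rw [this, Matrix.det_smul, (φ y).prop, mul_one, Fintype.card_fin] at hdet'
      exact hdet'
    -- 2 not a zero divisor ⇒ 2^n ≠ 0
    have : ∀ k : ℕ, (2 : R ⧸ 𝔞) ^ k ≠ 0 := by
      intro k
      induction k with
      | zero => simp
      | succ m ih =>
        intro h
        rw [pow_succ, mul_comm] at h
        exact ih (h2 _ h)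
    exact this n h2n
  exact SimpleGraph.chromaticNumber_le_of_forall_imp
    (fun m ⟨c⟩ => ⟨c.comp hom⟩)
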